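/- Let n ≥ 0, let i ∈ {0, …, n}, and let μ be a nonnegative Borel measure on I with μ(I ∩ {b}) = 0 such that h_{j;μ}(x) < ∞ for all j ∈ {i, …, n} and all x ∈ I. Then the function h_{i;μ}/w_i is nondecreasing on I (hence locally bounded) and of class LD; moreover, if i < n, then h_{i;μ}(x)/w_i(x) = h_{i;μ}(z)/w_i(z) + ∫_z^x h_{i+1;μ}(u) du for all x, z ∈ I. -/

import Mathlib

open MeasureTheory Set Filter
open scoped ENNReal

noncomputable section

/-- `g` is right-continuous at every point of `I` that is not the greatest point of `I`,
and left-continuous at the greatest point of `I` when the latter exists (the class `LD`). -/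
def IsLD (I : Set ℝ) (g : ℝ → ℝ) : Prop :=
  (∀ x ∈ I, (∃ y ∈ I, x < y) → Tendsto g (nhdsWithin x (I ∩ Ioi x)) (nhds (g x))) ∧
  (∀ x ∈ I, (∀ y ∈ I, y ≤ x) → Tendsto g (nhdsWithin x (I ∩ Iio x)) (nhds (g x)))

/-- `d 0, …, d n` is the system of generalized derivatives of `f` on `I` with respect to the
gauge sequence `w`; i.e., `f ∈ L^n` with `f^{(j)} = d j` for `j = 0, …, n`. -/
structure IsGenL (I : Set ℝ) (w : ℕ → ℝ → ℝ) (n : ℕ) (f : ℝ → ℝ) (d : ℕ → ℝ → ℝ) : Prop where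
  base : ∀ x ∈ I, f x = d 0 x * w 0 x
  ld : IsLD I (d n)
  integrable : ∀ j < n, ∀ z ∈ I, ∀ x ∈ I,
    IntervalIntegrable (fun u => d (j + 1) u * w (j + 1) u) volume z x
  deriv_eq : ∀ j < n, ∀ z ∈ I, ∀ x ∈ I,
    d j x = d j z + ∫ u in z..x, d (j + 1) u * w (j + 1) u

/-- `f ∈ F_+^{k:n}(I)` (with derivative system `d`): all the generalized derivatives
`f^{(j)} = d j` of orders `j = k-1, …, n` are nondecreasing on `I`. -/
def MemF (I : Set ℝ) (w : ℕ → ℝ → ℝ) (k n : ℕ) (f : ℝ → ℝ) (d : ℕ → ℝ → ℝ) : Prop :=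
  IsGenL I w n f d ∧ ∀ j, k - 1 ≤ j → j ≤ n → MonotoneOn (d j) I

/-- `w` is a sequence of positive, Borel-measurable, locally bounded gauge functions on `I`. -/
def IsGauge (I : Set ℝ) (w : ℕ → ℝ → ℝ) : Prop :=
  ∀ j, (∀ x ∈ I, 0 < w j x) ∧ Measurable (fun x : I => w j x) ∧
    ∀ K ⊆ I, IsCompact K → ∃ C, ∀ x ∈ K, |w j x| ≤ C

def pAux (w : ℕ → ℝ → ℝ) (t : ℝ) (m : ℕ) : ℕ → ℝ → ℝ
  | 0 => w m
  | (i + 1) => fun x => w (m - (i + 1)) x * ∫ u in t..x, pAux w t m i u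

/-- The `w`-polynomial `p_{t;j,m}` (for `t ∈ I`). -/
def pfun (w : ℕ → ℝ → ℝ) (t : ℝ) (j m : ℕ) : ℝ → ℝ := pAux w t m (m - j)

/-- The "positive part" `p^+_{t;j,m}`. -/
def pplus (w : ℕ → ℝ → ℝ) (t : ℝ) (j m : ℕ) : ℝ → ℝ := fun x =>
  if t ≤ x then pfun w t j m x else 0

def pAuxE (w : ℕ → ℝ → ℝ) (I : Set ℝ) (m : ℕ) : ℕ → ℝ → ℝ≥0∞
  | 0 => fun x => ENNReal.ofReal (w m x)
  | (i + 1) => fun x =>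
      ENNReal.ofReal (w (m - (i + 1)) x) * ∫⁻ u in I ∩ Iio x, pAuxE w I m i u

/-- `p_{a;j,m} : I → [0, ∞]`, where `a` is the left endpoint of `I` (the integrals from `a`
are taken over `(a, x) ∩ I = I ∩ Iio x`). -/
def pE (w : ℕ → ℝ → ℝ) (I : Set ℝ) (j m : ℕ) : ℝ → ℝ≥0∞ := pAuxE w I m (m - j)

/-- The filter of `x ↓ a` within `I`, `a` being the left endpoint of `I`. -/
def leftEndFilter (I : Set ℝ) : Filter ℝ := ⨅ c ∈ I, Filter.principal (I ∩ Iic c)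

/-- `ν(f) = ∫_I f dν ∈ [−∞, ∞]`. -/
def nuEval (ν : Measure ℝ) (I : Set ℝ) (f : ℝ → ℝ) : EReal :=
  ((∫⁻ x in I, ENNReal.ofReal (f x) ∂ν : ℝ≥0∞) : EReal)
    - ((∫⁻ x in I, ENNReal.ofReal (-f x) ∂ν : ℝ≥0∞) : EReal)

/-- The expectation `E g ∈ [−∞, ∞]` (in the extended sense). -/
def eval' {α : Type*} [MeasurableSpace α] (P : Measure α) (g : α → ℝ) : EReal :=
  ((∫⁻ a, ENNReal.ofReal (g a) ∂P : ℝ≥0∞) : EReal)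
    - ((∫⁻ a, ENNReal.ofReal (-g a) ∂P : ℝ≥0∞) : EReal)

namespace Stmt5Aux

lemma bdd_of_monotoneOn {I : Set ℝ} {f : ℝ → ℝ} (hf : MonotoneOn f I) :
    ∀ K ⊆ I, IsCompact K → ∃ C, ∀ x ∈ K, |f x| ≤ C := by
  intro K hKI hK
  rcases K.eq_empty_or_nonempty with h | h
  · exact ⟨0, by simp [h]⟩
  · refine ⟨max |f (sInf K)| |f (sSup K)|, fun x hx => ?_⟩
    have h1 : sInf K ∈ K := hK.sInf_mem h
    have h2 : sSup K ∈ K := hK.sSup_mem h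
    have hx1 : sInf K ≤ x := csInf_le hK.bddBelow hx
    have hx2 : x ≤ sSup K := le_csSup hK.bddAbove hx
    rw [abs_le]
    constructor
    · calc -(max |f (sInf K)| |f (sSup K)|) ≤ -|f (sInf K)| :=
            neg_le_neg (le_max_left _ _)
        _ ≤ f (sInf K) := neg_abs_le _
        _ ≤ f x := hf (hKI h1) (hKI hx) hx1
    · calc f x ≤ f (sSup K) := hf (hKI hx) (hKI h2) hx2
        _ ≤ |f (sSup K)| := le_abs_self _
        _ ≤ _ := le_max_right _ _

lemma tendsto_cdf_right (ν : Measure ℝ) {x y : ℝ} (hxy : x < y) (hy : ν (Iic y) ≠ ⊤)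
    {l : Filter ℝ} (hl : l ≤ nhdsWithin x (Ioi x)) :
    Tendsto (fun z => (ν (Iic z)).toReal) l (nhds ((ν (Iic x)).toReal)) := by
  have hxfin : ν (Iic x) ≠ ⊤ :=
    ne_top_of_le_ne_top hy (measure_mono (Iic_subset_Iic.2 hxy.le))
  have main : Tendsto (fun z => ν (Iic z)) l (nhds (ν (Iic x))) := by
    rw [tendsto_order]
    constructor
    · intro c hc
      filter_upwards [hl self_mem_nhdsWithin] with z hz
      exact lt_of_lt_of_le hc (measure_mono (Iic_subset_Iic.2 (le_of_lt hz)))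
    · intro c hc
      set s : ℕ → Set ℝ := fun k => Iic (x + (y - x) * (1 / (k + 1))) with hs
      have hyx : (0:ℝ) < y - x := by linarith
      have htd : Tendsto (fun k : ℕ => x + (y - x) * (1 / (k + 1))) atTop (nhds x) := by
        have := tendsto_one_div_add_atTop_nhds_zero_nat.const_mul (y - x)
        have h2 := this.const_add x
        simpa using h2
      have hanti : Antitone s := by
        intro a b hab
        simp only [hs, le_eq_subset]
        apply Iic_subset_Iic.2
        have : (1:ℝ) / (b + 1) ≤ 1 / (a + 1) := by
          apply one_div_le_one_div_of_le (by positivity)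
          exact_mod_cast by omega
        nlinarith
      have hiInter : ⋂ k, s k = Iic x := by
        ext z
        simp only [mem_iInter, hs, mem_Iic]
        constructor
        · intro h
          exact ge_of_tendsto' htd h
        · intro h k
          have : (0:ℝ) < 1 / ((k:ℝ) + 1) := by positivity
          nlinarith
      have hm := tendsto_measure_iInter_atTop
        (fun k => (measurableSet_Iic (α := ℝ)).nullMeasurableSet) hanti
        ⟨0, by simpa [hs] using (ne_top_of_le_ne_top hy (measure_mono (Iic_subset_Iic.2 (by norm_num))))⟩
      rw [hiInter] at hm
      obtain ⟨k, hk⟩ := (hm.eventually_lt_const hc).exists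
      have hlt : x < x + (y - x) * (1 / (k + 1)) := by
        have : (0:ℝ) < 1 / ((k:ℝ) + 1) := by positivity
        nlinarith
      filter_upwards [hl (nhdsWithin_le_nhds (Iio_mem_nhds hlt))] with z hz
      exact lt_of_le_of_lt (measure_mono (Iic_subset_Iic.2 (le_of_lt hz))) hk
  exact (ENNReal.tendsto_toReal hxfin).comp main

lemma tendsto_cdf_left (ν : Measure ℝ) {x : ℝ} (hatom : ν {x} = 0) (hfin : ν (Iic x) ≠ ⊤)
    {l : Filter ℝ} (hl : l ≤ nhdsWithin x (Iio x)) :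
    Tendsto (fun z => (ν (Iic z)).toReal) l (nhds ((ν (Iic x)).toReal)) := by
  have hIio : ν (Iic x) = ν (Iio x) := by
    refine le_antisymm ?_ (measure_mono Iio_subset_Iic_self)
    calc ν (Iic x) = ν (Iio x ∪ {x}) := by rw [Iio_union_right]
      _ ≤ ν (Iio x) + ν {x} := measure_union_le _ _
      _ = ν (Iio x) := by rw [hatom, add_zero]
  have main : Tendsto (fun z => ν (Iic z)) l (nhds (ν (Iic x))) := by
    rw [tendsto_order]
    constructor
    · intro c hc
      rw [hIio] at hc
      set s : ℕ → Set ℝ := fun k => Iic (x - 1 / (k + 1)) with hs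
      have hmono : Monotone s := by
        intro a b hab
        simp only [hs, le_eq_subset]
        apply Iic_subset_Iic.2
        have : (1:ℝ) / (b + 1) ≤ 1 / (a + 1) := by
          apply one_div_le_one_div_of_le (by positivity)
          exact_mod_cast by omega
        linarith
      have hiUnion : ⋃ k, s k = Iio x := by
        ext z
        simp only [mem_iUnion, hs, mem_Iic, mem_Iio]
        constructor
        · rintro ⟨k, hk⟩
          have : (0:ℝ) < 1 / ((k:ℝ) + 1) := by positivity
          linarith
        · intro h
          obtain ⟨k, hk⟩ := exists_nat_one_div_lt (show (0:ℝ) < x - z by linarith)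
          exact ⟨k, by linarith⟩
      have hm := tendsto_measure_iUnion_atTop (μ := ν) hmono
      rw [hiUnion] at hm
      obtain ⟨k, hk⟩ := (hm.eventually_const_lt hc).exists
      have hlt : x - 1 / ((k:ℝ) + 1) < x := by
        have : (0:ℝ) < 1 / ((k:ℝ) + 1) := by positivity
        linarith
      filter_upwards [hl (nhdsWithin_le_nhds (Ioi_mem_nhds hlt))] with z hz
      exact lt_of_lt_of_le hk (measure_mono (Iic_subset_Iic.2 (le_of_lt hz)))
    · intro c hc
      filter_upwards [hl self_mem_nhdsWithin] with z hz
      exact lt_of_le_of_lt (measure_mono (Iic_subset_Iic.2 (le_of_lt hz))) hc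
  exact (ENNReal.tendsto_toReal hfin).comp main

lemma measurable_pAux {w : ℕ → ℝ → ℝ} (hw : ∀ j, Measurable (w j)) (m : ℕ) :
    ∀ k, Measurable (fun p : ℝ × ℝ => pAux w p.1 m k p.2) := by
  intro k
  induction k with
  | zero => exact (hw m).comp measurable_snd
  | succ k ih =>
    have key : ∀ (a b : ℝ × ℝ → ℝ), Measurable a → Measurable b →
        Measurable fun p : ℝ × ℝ => ∫ u in Ioc (a p) (b p), pAux w p.1 m k u := by
      intro a b ha hb
      have hq : Measurable (fun q : (ℝ × ℝ) × ℝ => pAux w q.1.1 m k q.2) :=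
        ih.comp (measurable_fst.fst.prodMk measurable_snd)
      have hsm : StronglyMeasurable (Function.uncurry fun (p : ℝ × ℝ) (u : ℝ) =>
          (Ioc (a p) (b p)).indicator (fun v => pAux w p.1 m k v) u) := by
        apply Measurable.stronglyMeasurable
        have heq : (Function.uncurry fun (p : ℝ × ℝ) (u : ℝ) =>
            (Ioc (a p) (b p)).indicator (fun v => pAux w p.1 m k v) u)
            = ({q : (ℝ × ℝ) × ℝ | a q.1 < q.2 ∧ q.2 ≤ b q.1}).indicator
                (fun q => pAux w q.1.1 m k q.2) := by
          funext q
          simp only [Function.uncurry, Set.indicator_apply, Set.mem_Ioc, Set.mem_setOf_eq]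
        rw [heq]
        exact hq.indicator ((measurableSet_lt (ha.comp measurable_fst) measurable_snd).inter
          (measurableSet_le measurable_snd (hb.comp measurable_fst)))
      have h2 : (fun p : ℝ × ℝ => ∫ u in Ioc (a p) (b p), pAux w p.1 m k u)
          = fun p : ℝ × ℝ => ∫ u, (Ioc (a p) (b p)).indicator (fun v => pAux w p.1 m k v) u := by
        funext p; rw [integral_indicator measurableSet_Ioc]
      rw [h2]
      exact hsm.integral_prod_right.measurable
    have hdef : (fun p : ℝ × ℝ => pAux w p.1 m (k + 1) p.2)
        = fun p : ℝ × ℝ => w (m - (k + 1)) p.2 *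
            ((∫ u in Ioc p.1 p.2, pAux w p.1 m k u) - ∫ u in Ioc p.2 p.1, pAux w p.1 m k u) := by
      funext p
      simp only [pAux]
      rfl
    rw [hdef]
    exact ((hw _).comp measurable_snd).mul
      ((key _ _ measurable_fst measurable_snd).sub (key _ _ measurable_snd measurable_fst))

lemma measurable_pplus {w : ℕ → ℝ → ℝ} (hw : ∀ j, Measurable (w j)) (j m : ℕ) :
    Measurable (fun p : ℝ × ℝ => pplus w p.1 j m p.2) := by
  simp only [pplus, pfun]
  exact Measurable.ite (measurableSet_le measurable_fst measurable_snd)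
    (measurable_pAux hw m _) measurable_const

lemma pAux_nonneg {I : Set ℝ} (hI : I.OrdConnected) {w : ℕ → ℝ → ℝ}
    (hpos : ∀ j, ∀ x ∈ I, 0 ≤ w j x) (m : ℕ) {t : ℝ} (ht : t ∈ I) :
    ∀ k, ∀ u ∈ I, t ≤ u → 0 ≤ pAux w t m k u := by
  intro k
  induction k with
  | zero => exact fun u hu _ => hpos m u hu
  | succ k ih =>
    intro u hu htu
    simp only [pAux]
    apply mul_nonneg (hpos _ u hu)
    apply intervalIntegral.integral_nonneg htu
    intro v hv
    exact ih v (hI.out ht hu hv) hv.1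

lemma pAux_bound {I : Set ℝ} (hI : I.OrdConnected) {w : ℕ → ℝ → ℝ}
    (hbd : ∀ j, ∀ K ⊆ I, IsCompact K → ∃ C, ∀ x ∈ K, |w j x| ≤ C) (m : ℕ)
    {t x : ℝ} (ht : t ∈ I) (hx : x ∈ I) (htx : t ≤ x) :
    ∀ k, ∃ C, ∀ u ∈ Icc t x, |pAux w t m k u| ≤ C := by
  intro k
  induction k with
  | zero => exact hbd m (Icc t x) (hI.out ht hx) isCompact_Icc
  | succ k ih =>
    obtain ⟨C, hC⟩ := ih
    obtain ⟨D, hD⟩ := hbd (m - (k + 1)) (Icc t x) (hI.out ht hx) isCompact_Icc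
    refine ⟨|D| * (max C 0 * (x - t)), fun u hu => ?_⟩
    simp only [pAux, abs_mul]
    have hwu : |w (m - (k + 1)) u| ≤ |D| := (hD u hu).trans (le_abs_self D)
    have h2 : |∫ v in t..u, pAux w t m k v| ≤ max C 0 * |u - t| := by
      rw [← Real.norm_eq_abs]
      apply intervalIntegral.norm_integral_le_of_norm_le_const
      intro v hv
      rw [uIoc_of_le hu.1] at hv
      rw [Real.norm_eq_abs]
      exact le_trans (hC v ⟨hv.1.le, hv.2.trans hu.2⟩) (le_max_left _ _)
    have h3 : |∫ v in t..u, pAux w t m k v| ≤ max C 0 * (x - t) := by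
      refine h2.trans ?_
      have habs : |u - t| = u - t := abs_of_nonneg (by linarith [hu.1])
      rw [habs]
      exact mul_le_mul_of_nonneg_left (by linarith [hu.2]) (le_max_right C 0)
    exact mul_le_mul hwu h3 (abs_nonneg _) (abs_nonneg _)

lemma pAux_congr {I : Set ℝ} (hI : I.OrdConnected) {w w' : ℕ → ℝ → ℝ}
    (hww' : ∀ j, EqOn (w j) (w' j) I) (m : ℕ) {t : ℝ} (ht : t ∈ I) :
    ∀ k, ∀ x ∈ I, pAux w t m k x = pAux w' t m k x := by
  intro k
  induction k with
  | zero => exact fun x hx => hww' m hx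
  | succ k ih =>
    intro x hx
    simp only [pAux]
    rw [hww' _ hx, intervalIntegral.integral_congr
      (g := fun u => pAux w' t m k u) (fun u hu => ih u (hI.uIcc_subset ht hx hu))]


lemma sigmaFinite_restrict_of_cdf_fin {I : Set ℝ} (hIm : MeasurableSet I) (μ : Measure ℝ)
    (hfin : ∀ x ∈ I, μ (Iic x ∩ I) ≠ ⊤) : SigmaFinite (μ.restrict I) := by
  rcases I.eq_empty_or_nonempty with rfl | ⟨p, hp⟩
  · rw [Measure.restrict_empty]; infer_instance
  by_cases hmax : ∃ m ∈ I, ∀ y ∈ I, y ≤ m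
  · obtain ⟨m, hm, hmx⟩ := hmax
    have : IsFiniteMeasure (μ.restrict I) := by
      constructor
      rw [Measure.restrict_apply_univ]
      have hIeq : I = Iic m ∩ I := by
        ext z; simp only [mem_inter_iff, mem_Iic]
        exact ⟨fun hz => ⟨hmx z hz, hz⟩, fun hz => hz.2⟩
      rw [hIeq]
      exact (hfin m hm).lt_top
    infer_instance
  push_neg at hmax
  have hch : ∀ q : ℚ, ∃ z : ℝ, z ∈ I ∧ ((∃ y ∈ I, (q : ℝ) ≤ y) → (q : ℝ) ≤ z) := by
    intro q
    by_cases h : ∃ y ∈ I, (q : ℝ) ≤ y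
    · obtain ⟨y, hy, hqy⟩ := h; exact ⟨y, hy, fun _ => hqy⟩
    · exact ⟨p, hp, fun h' => absurd h' h⟩
  choose e he1 he2 using hch
  have hcof : ∀ x ∈ I, ∃ q : ℚ, x ≤ e q := by
    intro x hx
    obtain ⟨y, hy, hxy⟩ := hmax x hx
    obtain ⟨q, hq1, hq2⟩ := exists_rat_btwn hxy
    exact ⟨q, le_trans hq1.le (he2 q ⟨y, hy, hq2.le⟩)⟩
  obtain ⟨g, hg⟩ := exists_surjective_nat ℚ
  refine ⟨⟨⟨fun k => Iic (e (g k)) ∪ Iᶜ, fun _ => trivial, ?_, ?_⟩⟩⟩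
  · intro k
    rw [Measure.restrict_apply' hIm]
    have hset : (Iic (e (g k)) ∪ Iᶜ) ∩ I = Iic (e (g k)) ∩ I := by
      ext z
      simp only [mem_inter_iff, mem_union, mem_compl_iff, mem_Iic]
      tauto
    rw [hset]
    exact (hfin _ (he1 _)).lt_top
  · apply eq_univ_of_forall
    intro z
    by_cases hz : z ∈ I
    · obtain ⟨q, hq⟩ := hcof z hz
      obtain ⟨k, rfl⟩ := hg q
      exact mem_iUnion.2 ⟨k, Or.inl hq⟩
    · exact mem_iUnion.2 ⟨0, Or.inr hz⟩

lemma H_top {I : Set ℝ} (w : ℕ → ℝ → ℝ) (μ : Measure ℝ) (n : ℕ) (x : ℝ) :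
    ∫⁻ t in I, ENNReal.ofReal (pplus w t n n x) ∂μ
      = ENNReal.ofReal (w n x) * μ (Iic x ∩ I) := by
  have h1 : ∀ t : ℝ, ENNReal.ofReal (pplus w t n n x)
      = (Iic x).indicator (fun _ => ENNReal.ofReal (w n x)) t := by
    intro t
    simp only [pplus, pfun, Nat.sub_self, indicator_apply, mem_Iic]
    by_cases htx : t ≤ x
    · rw [if_pos htx, if_pos htx]
      rfl
    · rw [if_neg htx, if_neg htx, ENNReal.ofReal_zero]
  simp_rw [h1]
  rw [lintegral_indicator measurableSet_Iic, setLIntegral_const,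
    Measure.restrict_apply measurableSet_Iic]

lemma measurable_H {I : Set ℝ} {w : ℕ → ℝ → ℝ} (hw : ∀ j, Measurable (w j))
    (μ : Measure ℝ) [SFinite (μ.restrict I)] (j m : ℕ) :
    Measurable (fun u => ∫⁻ t in I, ENNReal.ofReal (pplus w t j m u) ∂μ) :=
  Measurable.lintegral_prod_left (f := fun t u => ENNReal.ofReal (pplus w t j m u))
    ((measurable_pplus hw j m).ennreal_ofReal)

lemma key_rec {I : Set ℝ} (hI : I.OrdConnected) (hIm : MeasurableSet I)
    {w : ℕ → ℝ → ℝ} (hwm : ∀ j, Measurable (w j))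
    (hwpos : ∀ j, ∀ x ∈ I, 0 < w j x)
    (hwbd : ∀ j, ∀ K ⊆ I, IsCompact K → ∃ C, ∀ x ∈ K, |w j x| ≤ C)
    (μ : Measure ℝ) [SFinite (μ.restrict I)]
    (n i : ℕ) (hin : i < n) {x : ℝ} (hx : x ∈ I) :
    ∫⁻ t in I, ENNReal.ofReal (pplus w t i n x) ∂μ
      = ENNReal.ofReal (w i x) *
        ∫⁻ u in I ∩ Iio x, ∫⁻ t in I, ENNReal.ofReal (pplus w t (i + 1) n u) ∂μ := by
  have hpt : ∀ t ∈ I, ENNReal.ofReal (pplus w t i n x)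
      = ENNReal.ofReal (w i x) * ∫⁻ u in I ∩ Iio x, ENNReal.ofReal (pplus w t (i + 1) n u) := by
    intro t ht
    by_cases htx : t ≤ x
    · have hIcc : Icc t x ⊆ I := hI.out ht hx
      have hunf : pplus w t i n x = w i x * ∫ u in t..x, pAux w t n (n - (i + 1)) u := by
        rw [pplus, if_pos htx, pfun]
        have h1 : n - i = (n - (i + 1)) + 1 := by omega
        rw [h1]
        show w (n - ((n - (i + 1)) + 1)) x * _ = _
        have h2 : n - ((n - (i + 1)) + 1) = i := by omega
        rw [h2]
      have hnn : ∀ u ∈ Ioc t x, 0 ≤ pAux w t n (n - (i + 1)) u := fun u hu =>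
        pAux_nonneg hI (fun j y hy => (hwpos j y hy).le) n ht _ u (hIcc ⟨hu.1.le, hu.2⟩) hu.1.le
      obtain ⟨C, hC⟩ := pAux_bound hI hwbd n ht hx htx (n - (i + 1))
      have hmeas : Measurable fun u => pAux w t n (n - (i + 1)) u :=
        (measurable_pAux hwm n _).comp (measurable_const.prodMk measurable_id)
      have hint : IntegrableOn (fun u => pAux w t n (n - (i + 1)) u) (Ioc t x) volume := by
        apply Measure.integrableOn_of_bounded (M := C) measure_Ioc_lt_top.ne
          hmeas.aestronglyMeasurable
        exact (ae_restrict_iff' measurableSet_Ioc).2 (ae_of_all _ fun u hu => by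
          rw [Real.norm_eq_abs]; exact hC u ⟨hu.1.le, hu.2⟩)
      have h0 : ENNReal.ofReal (∫ u in t..x, pAux w t n (n - (i + 1)) u)
          = ∫⁻ u in Ioc t x, ENNReal.ofReal (pAux w t n (n - (i + 1)) u) := by
        rw [intervalIntegral.integral_of_le htx]
        exact ofReal_integral_eq_lintegral_ofReal hint
          ((ae_restrict_iff' measurableSet_Ioc).2 (ae_of_all _ hnn))
      have h1 : ∫⁻ u in Ioc t x, ENNReal.ofReal (pAux w t n (n - (i + 1)) u)
          = ∫⁻ u in Ico t x, ENNReal.ofReal (pAux w t n (n - (i + 1)) u) :=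
        setLIntegral_congr (Ioc_ae_eq_Icc.trans Ico_ae_eq_Icc.symm)
      have h2 : ∫⁻ u in Ico t x, ENNReal.ofReal (pAux w t n (n - (i + 1)) u)
          = ∫⁻ u in I ∩ Iio x, ENNReal.ofReal (pplus w t (i + 1) n u) := by
        rw [← lintegral_indicator measurableSet_Ico,
          ← lintegral_indicator (hIm.inter measurableSet_Iio)]
        congr 1
        funext u
        by_cases hu : u ∈ Ico t x
        · have hu2 : u ∈ I ∩ Iio x := ⟨hIcc ⟨hu.1, hu.2.le⟩, hu.2⟩
          rw [indicator_of_mem hu, indicator_of_mem hu2]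
          rw [pplus, if_pos hu.1, pfun]
        · rw [indicator_of_notMem hu]
          by_cases hu2 : u ∈ I ∩ Iio x
          · rw [indicator_of_mem hu2, pplus, if_neg, ENNReal.ofReal_zero]
            intro hle; exact hu ⟨hle, hu2.2⟩
          · rw [indicator_of_notMem hu2]
      rw [hunf, ENNReal.ofReal_mul (hwpos i x hx).le, h0, h1, h2]
    · have houter : pplus w t i n x = 0 := by rw [pplus, if_neg htx]
      have hinner : ∫⁻ u in I ∩ Iio x, ENNReal.ofReal (pplus w t (i + 1) n u) = 0 := by
        rw [setLIntegral_congr_fun (hIm.inter measurableSet_Iio)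
          (fun u hu => ?_), lintegral_zero]
        · push_neg at htx
          rw [pplus, if_neg (by push_neg; exact hu.2.trans htx : ¬ t ≤ u), ENNReal.ofReal_zero]
      rw [houter, ENNReal.ofReal_zero, hinner, mul_zero]
  calc ∫⁻ t in I, ENNReal.ofReal (pplus w t i n x) ∂μ
      = ∫⁻ t in I, (ENNReal.ofReal (w i x) *
          ∫⁻ u in I ∩ Iio x, ENNReal.ofReal (pplus w t (i + 1) n u)) ∂μ :=
        setLIntegral_congr_fun hIm hpt
    _ = ENNReal.ofReal (w i x) *
          ∫⁻ t in I, (∫⁻ u in I ∩ Iio x, ENNReal.ofReal (pplus w t (i + 1) n u)) ∂μ :=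
        lintegral_const_mul' _ _ ENNReal.ofReal_ne_top
    _ = ENNReal.ofReal (w i x) *
          ∫⁻ u in I ∩ Iio x, ∫⁻ t in I, ENNReal.ofReal (pplus w t (i + 1) n u) ∂μ := by
        congr 1
        exact lintegral_lintegral_swap
          ((measurable_pplus hwm (i + 1) n).ennreal_ofReal.aemeasurable)

end Stmt5Aux

open Stmt5Aux

/-- Lemma `h_{i;μ}`: properties of the mixtures
`h_{i;μ}(x) = ∫_I p^+_{t;i,n}(x) μ(dt)`. -/
theorem stmt_5 (I : Set ℝ) (hI : I.OrdConnected) (hIne : ∃ p ∈ I, ∃ q ∈ I, p < q)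
    (w : ℕ → ℝ → ℝ) (hw : IsGauge I w)
    (n i : ℕ) (hi : i ≤ n)
    (μ : Measure ℝ)
    (hμb : ∀ x ∈ I, (∀ y ∈ I, y ≤ x) → μ {x} = 0)
    (hfin : ∀ j, i ≤ j → j ≤ n → ∀ x ∈ I,
      (∫⁻ t in I, ENNReal.ofReal (pplus w t j n x) ∂μ) ≠ ⊤) :
    MonotoneOn (fun x => (∫⁻ t in I, ENNReal.ofReal (pplus w t i n x) ∂μ).toReal / w i x) I ∧
    (∀ K ⊆ I, IsCompact K → ∃ C, ∀ x ∈ K,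
      |(∫⁻ t in I, ENNReal.ofReal (pplus w t i n x) ∂μ).toReal / w i x| ≤ C) ∧
    IsLD I (fun x => (∫⁻ t in I, ENNReal.ofReal (pplus w t i n x) ∂μ).toReal / w i x) ∧
    (i < n → ∀ z ∈ I, ∀ x ∈ I,
      IntervalIntegrable
        (fun u => (∫⁻ t in I, ENNReal.ofReal (pplus w t (i + 1) n u) ∂μ).toReal) volume z x ∧
      (∫⁻ t in I, ENNReal.ofReal (pplus w t i n x) ∂μ).toReal / w i x
        = (∫⁻ t in I, ENNReal.ofReal (pplus w t i n z) ∂μ).toReal / w i z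
          + ∫ u in z..x, (∫⁻ t in I, ENNReal.ofReal (pplus w t (i + 1) n u) ∂μ).toReal) := by
  classical
  have hIm : MeasurableSet I := hI.measurableSet
  set w' : ℕ → ℝ → ℝ :=
    fun j => Function.extend (Subtype.val : I → ℝ) (fun x : I => w j x) (fun _ => 1) with hw'def
  have hw'I : ∀ j, EqOn (w j) (w' j) I := by
    intro j x hx
    simp only [hw'def]
    exact (Function.Injective.extend_apply Subtype.val_injective
      (fun x : I => w j x) (fun _ => 1) ⟨x, hx⟩).symm
  have hw'm : ∀ j, Measurable (w' j) := fun j =>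
    (MeasurableEmbedding.subtype_coe hIm).measurable_extend (hw j).2.1 measurable_const
  have hw'pos : ∀ j, ∀ x ∈ I, 0 < w' j x := fun j x hx => (hw'I j hx) ▸ (hw j).1 x hx
  have hw'bd : ∀ j, ∀ K ⊆ I, IsCompact K → ∃ C, ∀ x ∈ K, |w' j x| ≤ C := by
    intro j K hK hKc
    obtain ⟨C, hC⟩ := (hw j).2.2 K hK hKc
    exact ⟨C, fun x hx => (hw'I j (hK hx)) ▸ hC x hx⟩
  have hHc : ∀ j, ∀ x ∈ I,
      (∫⁻ t in I, ENNReal.ofReal (pplus w t j n x) ∂μ)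
        = ∫⁻ t in I, ENNReal.ofReal (pplus w' t j n x) ∂μ := by
    intro j x hx
    apply setLIntegral_congr_fun hIm
    refine fun t ht => ?_
    congr 1
    simp only [pplus, pfun]
    by_cases htx : t ≤ x
    · rw [if_pos htx, if_pos htx]
      exact congrArg ENNReal.ofReal (pAux_congr hI hw'I n ht _ x hx)
    · rw [if_neg htx, if_neg htx]
  have hμfin : ∀ x ∈ I, μ (Iic x ∩ I) ≠ ⊤ := by
    intro x hx
    have h1 := hfin n hi le_rfl x hx
    rw [H_top] at h1
    intro h2
    rw [h2, ENNReal.mul_top (ENNReal.ofReal_pos.2 ((hw n).1 x hx)).ne'] at h1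
    exact h1 rfl
  haveI := sigmaFinite_restrict_of_cdf_fin hIm μ hμfin
  obtain ⟨ν, hν_eq, hν_fin, hν_atom, hb4⟩ :
      ∃ ν : Measure ℝ,
        (∀ x ∈ I, (∫⁻ t in I, ENNReal.ofReal (pplus w t i n x) ∂μ).toReal / w i x
            = (ν (Iic x)).toReal) ∧
        (∀ x ∈ I, ν (Iic x) ≠ ⊤) ∧
        (∀ x ∈ I, (∀ y ∈ I, y ≤ x) → ν {x} = 0) ∧
        (i < n → ∀ z ∈ I, ∀ x ∈ I,
          IntervalIntegrable
            (fun u => (∫⁻ t in I, ENNReal.ofReal (pplus w t (i + 1) n u) ∂μ).toReal) volume z x ∧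
          (∫⁻ t in I, ENNReal.ofReal (pplus w t i n x) ∂μ).toReal / w i x
            = (∫⁻ t in I, ENNReal.ofReal (pplus w t i n z) ∂μ).toReal / w i z
              + ∫ u in z..x, (∫⁻ t in I, ENNReal.ofReal (pplus w t (i + 1) n u) ∂μ).toReal) := by
    by_cases hin : i < n
    case neg =>
      have hieq : i = n := by omega
      subst hieq
      refine ⟨μ.restrict I, ?_, ?_, ?_, fun h => absurd h hin⟩
      · intro x hx
        rw [H_top, Measure.restrict_apply measurableSet_Iic,
          ENNReal.toReal_mul, ENNReal.toReal_ofReal ((hw i).1 x hx).le,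
          mul_div_cancel_left₀ _ ((hw i).1 x hx).ne']
      · intro x hx
        rw [Measure.restrict_apply measurableSet_Iic]
        exact hμfin x hx
      · intro x hx hxtop
        rw [Measure.restrict_apply (measurableSet_singleton x)]
        exact measure_mono_null inter_subset_left (hμb x hx hxtop)
    case pos =>
      set H1 : ℝ → ℝ≥0∞ := fun u => ∫⁻ t in I, ENNReal.ofReal (pplus w' t (i + 1) n u) ∂μ
        with hH1
      have hH1m : Measurable H1 := measurable_H hw'm μ (i + 1) n
      set ν : Measure ℝ := (volume.restrict I).withDensity H1 with hνdef
      have hν_apply : ∀ s : Set ℝ, MeasurableSet s → ν s = ∫⁻ u in s ∩ I, H1 u := by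
        intro s hs
        rw [hνdef, withDensity_apply _ hs, Measure.restrict_restrict hs]
      have hkey : ∀ x ∈ I, (∫⁻ t in I, ENNReal.ofReal (pplus w t i n x) ∂μ)
          = ENNReal.ofReal (w i x) * ν (Iic x) := by
        intro x hx
        rw [hHc i x hx, key_rec hI hIm hw'm hw'pos hw'bd μ n i hin hx,
          hν_apply _ measurableSet_Iic]
        congr 1
        · exact congrArg ENNReal.ofReal (hw'I i hx).symm
        · rw [inter_comm (Iic x) I]
          exact setLIntegral_congr (ae_eq_set_inter (EventuallyEq.refl _ _) Iio_ae_eq_Iic)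
      have hν_fin : ∀ x ∈ I, ν (Iic x) ≠ ⊤ := by
        intro x hx
        have h1 := hfin i le_rfl hi x hx
        rw [hkey x hx] at h1
        intro h2
        rw [h2, ENNReal.mul_top (ENNReal.ofReal_pos.2 ((hw i).1 x hx)).ne'] at h1
        exact h1 rfl
      have hν_eq : ∀ x ∈ I,
          (∫⁻ t in I, ENNReal.ofReal (pplus w t i n x) ∂μ).toReal / w i x
            = (ν (Iic x)).toReal := by
        intro x hx
        rw [hkey x hx, ENNReal.toReal_mul, ENNReal.toReal_ofReal ((hw i).1 x hx).le,
          mul_div_cancel_left₀ _ ((hw i).1 x hx).ne']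
      have hν_atom : ∀ x : ℝ, ν {x} = 0 := by
        intro x
        rw [hν_apply _ (measurableSet_singleton x)]
        exact setLIntegral_measure_zero _ _
          (measure_mono_null inter_subset_left Real.volume_singleton)
      refine ⟨ν, hν_eq, hν_fin, fun x _ _ => hν_atom x, fun _ z hz x hx => ?_⟩
      have hsub : Set.uIoc z x ⊆ I := fun u hu => hI.uIcc_subset hz hx (Ioc_subset_Icc_self hu)
      have hM : max z x ∈ I := by
        rcases le_total z x with h | h
        · rw [max_eq_right h]; exact hx
        · rw [max_eq_left h]; exact hz
      have hlfin : ∫⁻ u in Set.uIoc z x, H1 u ≠ ⊤ := by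
        refine ne_top_of_le_ne_top (hν_fin (max z x) hM) ?_
        rw [hν_apply _ measurableSet_Iic]
        apply lintegral_mono_set
        intro u hu
        exact ⟨hu.2, hsub hu⟩
      have hIntOn : IntegrableOn (fun u => (H1 u).toReal) (Set.uIoc z x) volume :=
        integrable_toReal_of_lintegral_ne_top hH1m.aemeasurable.restrict hlfin
      have hIE : IntervalIntegrable
          (fun u => (∫⁻ t in I, ENNReal.ofReal (pplus w t (i + 1) n u) ∂μ).toReal)
          volume z x := by
        rw [intervalIntegrable_iff]
        exact hIntOn.congr_fun
          (fun u hu => (congrArg ENNReal.toReal (hHc (i + 1) u (hsub hu))).symm)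
          measurableSet_uIoc
      have hmain : ∀ a b : ℝ, a ∈ I → b ∈ I → a ≤ b →
          (ν (Iic b)).toReal = (ν (Iic a)).toReal + ∫ u in a..b, (H1 u).toReal := by
        intro a b ha hb hab
        have hIocI : Ioc a b ⊆ I := fun u hu => hI.out ha hb ⟨hu.1.le, hu.2⟩
        have hν_Ioc : ν (Ioc a b) = ∫⁻ u in Ioc a b, H1 u := by
          rw [hν_apply _ measurableSet_Ioc, inter_eq_self_of_subset_left hIocI]
        have hfin2 : ν (Ioc a b) ≠ ⊤ :=
          ne_top_of_le_ne_top (hν_fin b hb) (measure_mono (fun u hu => hu.2))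
        have hsplit : ν (Iic b) = ν (Iic a) + ν (Ioc a b) := by
          rw [← Iic_union_Ioc_eq_Iic hab, measure_union (Iic_disjoint_Ioc le_rfl)
            measurableSet_Ioc]
        rw [hsplit, ENNReal.toReal_add (hν_fin a ha) hfin2]
        congr 1
        rw [intervalIntegral.integral_of_le hab,
          integral_toReal hH1m.aemeasurable.restrict
            (ae_lt_top' hH1m.aemeasurable.restrict (hν_Ioc ▸ hfin2)),
          hν_Ioc]
      have heqn : (ν (Iic x)).toReal = (ν (Iic z)).toReal + ∫ u in z..x, (H1 u).toReal := by
        rcases le_total z x with h | h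
        · exact hmain z x hz hx h
        · have h2 := hmain x z hx hz h
          rw [intervalIntegral.integral_symm x z]
          linarith
      refine ⟨hIE, ?_⟩
      rw [hν_eq x hx, hν_eq z hz, heqn]
      congr 1
      apply intervalIntegral.integral_congr
      intro u hu
      exact congrArg ENNReal.toReal (hHc (i + 1) u (hI.uIcc_subset hz hx hu)).symm
  have hmono : MonotoneOn
      (fun x => (∫⁻ t in I, ENNReal.ofReal (pplus w t i n x) ∂μ).toReal / w i x) I := by
    have hFmono : MonotoneOn (fun z => (ν (Iic z)).toReal) I := fun a ha b hb hab =>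
      ENNReal.toReal_mono (hν_fin b hb) (measure_mono (Iic_subset_Iic.2 hab))
    exact hFmono.congr fun z hz => (hν_eq z hz).symm
  refine ⟨hmono, bdd_of_monotoneOn hmono, ⟨?_, ?_⟩, hb4⟩
  · rintro x hx ⟨y, hy, hxy⟩
    have hF := tendsto_cdf_right ν hxy (hν_fin y hy)
      (l := nhdsWithin x (I ∩ Ioi x)) (nhdsWithin_mono x inter_subset_right)
    show Tendsto _ _ (nhds ((∫⁻ t in I, ENNReal.ofReal (pplus w t i n x) ∂μ).toReal / w i x))
    rw [hν_eq x hx]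
    apply Tendsto.congr' ?_ hF
    filter_upwards [self_mem_nhdsWithin] with z hz
    exact (hν_eq z hz.1).symm
  · intro x hx hxtop
    have hF := tendsto_cdf_left ν (hν_atom x hx hxtop) (hν_fin x hx)
      (l := nhdsWithin x (I ∩ Iio x)) (nhdsWithin_mono x inter_subset_right)
    show Tendsto _ _ (nhds ((∫⁻ t in I, ENNReal.ofReal (pplus w t i n x) ∂μ).toReal / w i x))
    rw [hν_eq x hx]
    apply Tendsto.congr' ?_ hF
    filter_upwards [self_mem_nhdsWithin] with z hz
    exact (hν_eq z hz.1).symm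

end
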